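/- Define f(τ) := Γ(2α−τ) · Γ(τ+1) · sin(π(α−τ)) for real τ. Suppose one of the following holds: (a) 0 < α < 1/2 and 0 < τ < α; (b) 0 < α < 1 and 2α < τ < 1+α; (c) 0 < α < 1/2 and 1+2α < τ < 2. Then f(τ) > 0 and the derivative of f at τ is strictly negative. -/

import Mathlib

open Real Filter Set Topology

noncomputable def psiR (x : ℝ) : ℝ := deriv Real.Gamma x / Real.Gamma x

lemma Gamma_diff {x : ℝ} (hx : 0 < x) : DifferentiableAt ℝ Real.Gamma x :=
  Real.differentiableAt_Gamma fun m =>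
    ne_of_gt (lt_of_le_of_lt (by simp) hx)

lemma hasDerivAt_Gamma_psi {x : ℝ} (hx : 0 < x) :
    HasDerivAt Real.Gamma (Real.Gamma x * psiR x) x := by
  have h := (Gamma_diff hx).hasDerivAt
  have hne := (Real.Gamma_pos_of_pos hx).ne'
  refine h.congr_deriv ?_
  rw [psiR]; field_simp

lemma hasDerivAt_logGamma {x : ℝ} (hx : 0 < x) :
    HasDerivAt (fun t => Real.log (Real.Gamma t)) (psiR x) x := by
  have h := (hasDerivAt_Gamma_psi hx).log (Real.Gamma_pos_of_pos hx).ne'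
  convert h using 1
  have hne := (Real.Gamma_pos_of_pos hx).ne'
  field_simp

lemma psiR_le_log {x : ℝ} (hx : 0 < x) : psiR x ≤ Real.log x := by
  have h := Real.convexOn_log_Gamma.le_slope_of_hasDerivAt (mem_Ioi.mpr hx)
      (mem_Ioi.mpr (by linarith : (0:ℝ) < x + 1)) (by linarith)
      ((hasDerivAt_logGamma hx) : HasDerivAt (Real.log ∘ Real.Gamma) (psiR x) x)
  rw [slope_def_field] at h
  have h1 : Real.Gamma (x + 1) = x * Real.Gamma x := Real.Gamma_add_one hx.ne'
  simp only [Function.comp_apply] at h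
  rw [h1, Real.log_mul hx.ne' (Real.Gamma_pos_of_pos hx).ne'] at h
  calc psiR x ≤ (Real.log x + Real.log (Real.Gamma x) - Real.log (Real.Gamma x)) / (x + 1 - x) := h
    _ = Real.log x := by field_simp; ring

lemma log_le_psiR {x : ℝ} (hx : 1 < x) : Real.log (x - 1) ≤ psiR x := by
  have hx0 : (0:ℝ) < x := by linarith
  have hx1 : (0:ℝ) < x - 1 := by linarith
  have h := Real.convexOn_log_Gamma.slope_le_of_hasDerivAt (mem_Ioi.mpr hx1)
      (mem_Ioi.mpr hx0) (by linarith)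
      ((hasDerivAt_logGamma hx0) : HasDerivAt (Real.log ∘ Real.Gamma) (psiR x) x)
  rw [slope_def_field] at h
  have h1 : Real.Gamma x = (x - 1) * Real.Gamma (x - 1) := by
    have := Real.Gamma_add_one hx1.ne'
    rw [sub_add_cancel] at this
    exact this
  simp only [Function.comp_apply] at h
  rw [h1, Real.log_mul hx1.ne' (Real.Gamma_pos_of_pos hx1).ne'] at h
  calc Real.log (x - 1)
      = (Real.log (x - 1) + Real.log (Real.Gamma (x - 1)) - Real.log (Real.Gamma (x - 1)))
          / (x - (x - 1)) := by field_simp; ring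
    _ ≤ psiR x := h

lemma psiR_add_one {x : ℝ} (hx : 0 < x) : psiR (x + 1) = psiR x + 1 / x := by
  have h1 : HasDerivAt (fun t : ℝ => Real.log (Real.Gamma (t + 1))) (psiR (x + 1)) x := by
    have := (hasDerivAt_logGamma (by linarith : (0:ℝ) < x + 1)).comp x
      ((hasDerivAt_id x).add_const 1)
    simpa [Function.comp_def] using this
  have h2 : HasDerivAt (fun t : ℝ => Real.log t + Real.log (Real.Gamma t)) (1 / x + psiR x) x := by
    have := (Real.hasDerivAt_log hx.ne').add (hasDerivAt_logGamma hx)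
    rw [one_div]; exact this
  have heq : (fun t : ℝ => Real.log t + Real.log (Real.Gamma t))
      =ᶠ[nhds x] fun t => Real.log (Real.Gamma (t + 1)) := by
    filter_upwards [eventually_gt_nhds hx] with t ht
    rw [Real.Gamma_add_one ht.ne', Real.log_mul ht.ne' (Real.Gamma_pos_of_pos ht).ne']
  have h3 := h2.congr_of_eventuallyEq heq.symm
  have := h1.unique h3
  linarith

lemma psiR_add_nat {x : ℝ} (hx : 0 < x) (n : ℕ) :
    psiR (x + n) = psiR x + ∑ k ∈ Finset.range n, 1 / (x + k) := by
  induction n with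
  | zero => simp
  | succ n ih =>
    have hxn : (0:ℝ) < x + n := by positivity
    have e : x + (n + 1 : ℕ) = (x + n) + 1 := by push_cast; ring
    rw [e, psiR_add_one hxn, ih, Finset.sum_range_succ]
    ring

lemma tendsto_logshift (a : ℝ) :
    Tendsto (fun n : ℕ => Real.log (a + n) - Real.log n) atTop (nhds 0) := by
  have h0 : Tendsto (fun n : ℕ => a / n) atTop (nhds 0) :=
    tendsto_const_div_atTop_nhds_zero_nat a
  have h1 : Tendsto (fun n : ℕ => 1 + a / n) atTop (nhds 1) := by
    simpa using tendsto_const_nhds.add h0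
  have h2 : Tendsto (fun n : ℕ => Real.log (1 + a / n)) atTop (nhds 0) := by
    have := (Real.continuousAt_log one_ne_zero).tendsto.comp h1
    simpa [Function.comp_def] using this
  apply h2.congr'
  filter_upwards [eventually_gt_atTop (max 0 ⌈|a|⌉₊)] with n hn
  have hn0 : (0:ℝ) < n := by
    have : (0:ℕ) < n := lt_of_le_of_lt (le_max_left _ _) hn
    exact_mod_cast this
  have hna : (0:ℝ) < a + n := by
    have h3 : (⌈|a|⌉₊ : ℝ) < n := by
      exact_mod_cast lt_of_le_of_lt (le_max_right _ _) hn
    have h4 := abs_lt.mp (lt_of_le_of_lt (Nat.le_ceil |a|) h3)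
    linarith [h4.1]
  rw [← Real.log_div hna.ne' hn0.ne']
  congr 1
  field_simp
  ring

lemma psiR_diff_lt {x y h : ℝ} (hx : 0 < x) (hxy : x < y) (hh : 0 < h) :
    psiR (y + h) - psiR y < psiR (x + h) - psiR x := by
  have hy : 0 < y := hx.trans hxy
  have hxh : 0 < x + h := by positivity
  have hyh : 0 < y + h := by positivity
  set A := (psiR (x + h) - psiR x) - (psiR (y + h) - psiR y) with hA
  set s0 := (1 / x - 1 / (x + h)) - (1 / y - 1 / (y + h)) with hs0
  have hs0pos : 0 < s0 := by
    have e1 : 1 / x - 1 / (x + h) = h / (x * (x + h)) := by field_simp; ring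
    have e2 : 1 / y - 1 / (y + h) = h / (y * (y + h)) := by field_simp; ring
    rw [hs0, e1, e2, sub_pos]
    exact div_lt_div_of_pos_left hh (by positivity) (by nlinarith)
  set T : ℕ → ℝ := fun n =>
    (psiR (x + h + n) - psiR (x + n)) - (psiR (y + h + n) - psiR (y + n)) with hT
  have key : ∀ n : ℕ, 1 ≤ n → T n ≤ A - s0 := by
    intro n hn
    have esum : A - T n = ∑ k ∈ Finset.range n,
        ((1 / (x + k) - 1 / (x + h + k)) - (1 / (y + k) - 1 / (y + h + k))) := by
      have q1 := psiR_add_nat hxh n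
      have q2 := psiR_add_nat hx n
      have q3 := psiR_add_nat hyh n
      have q4 := psiR_add_nat hy n
      simp only [hT, hA, q1, q2, q3, q4, Finset.sum_sub_distrib]
      ring
    have hterm : ∀ k ∈ Finset.range n,
        0 ≤ (1 / (x + k) - 1 / (x + h + k)) - (1 / (y + k) - 1 / (y + h + k)) := by
      intro k _
      have hxk : (0:ℝ) < x + k := by positivity
      have hyk : (0:ℝ) < y + k := by positivity
      have e1 : 1 / (x + k) - 1 / (x + h + k) = h / ((x + k) * (x + h + k)) := by
        field_simp; ring
      have e2 : 1 / (y + k) - 1 / (y + h + k) = h / ((y + k) * (y + h + k)) := by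
        field_simp; ring
      rw [e1, e2, sub_nonneg]
      apply div_le_div_of_nonneg_left hh.le (by positivity)
      nlinarith [Nat.cast_nonneg (α := ℝ) k]
    have h0mem : (0:ℕ) ∈ Finset.range n := Finset.mem_range.mpr hn
    have hsingle := Finset.single_le_sum hterm h0mem
    have e0 : (1 / (x + ((0:ℕ):ℝ)) - 1 / (x + h + ((0:ℕ):ℝ)))
        - (1 / (y + ((0:ℕ):ℝ)) - 1 / (y + h + ((0:ℕ):ℝ))) = s0 := by
      push_cast; rw [hs0]; ring_nf
    rw [e0] at hsingle
    linarith [hsingle.trans_eq esum.symm]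
  have claim2 : Tendsto T atTop (nhds 0) := by
    have hlowt : Tendsto (fun n : ℕ =>
        ((Real.log ((x + h - 1) + n) - Real.log n) - (Real.log (x + n) - Real.log n))
          - ((Real.log ((y + h) + n) - Real.log n) - (Real.log ((y - 1) + n) - Real.log n)))
        atTop (nhds 0) := by
      simpa using ((tendsto_logshift (x + h - 1)).sub (tendsto_logshift x)).sub
        ((tendsto_logshift (y + h)).sub (tendsto_logshift (y - 1)))
    have hupt : Tendsto (fun n : ℕ =>
        ((Real.log ((x + h) + n) - Real.log n) - (Real.log ((x - 1) + n) - Real.log n))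
          - ((Real.log ((y + h - 1) + n) - Real.log n) - (Real.log (y + n) - Real.log n)))
        atTop (nhds 0) := by
      simpa using ((tendsto_logshift (x + h)).sub (tendsto_logshift (x - 1))).sub
        ((tendsto_logshift (y + h - 1)).sub (tendsto_logshift y))
    apply tendsto_of_tendsto_of_tendsto_of_le_of_le' hlowt hupt
    · filter_upwards [eventually_ge_atTop 1] with n hn
      have hn1 : (1:ℝ) ≤ n := by exact_mod_cast hn
      have f1 : Real.log (x + h + ↑n - 1) ≤ psiR (x + h + ↑n) :=
        log_le_psiR (show 1 < x + h + (n:ℝ) by linarith)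
      have f2 : psiR (x + ↑n) ≤ Real.log (x + ↑n) :=
        psiR_le_log (show (0:ℝ) < x + n by positivity)
      have f3 : psiR (y + h + ↑n) ≤ Real.log (y + h + ↑n) :=
        psiR_le_log (show (0:ℝ) < y + h + n by positivity)
      have f4 : Real.log (y + ↑n - 1) ≤ psiR (y + ↑n) :=
        log_le_psiR (show 1 < y + (n:ℝ) by linarith)
      have e1 : Real.log ((x + h - 1) + (n:ℝ)) = Real.log (x + h + ↑n - 1) :=
        congrArg Real.log (by ring)
      have e2 : Real.log ((y + h) + (n:ℝ)) = Real.log (y + h + ↑n) :=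
        congrArg Real.log (by ring)
      have e3 : Real.log ((y - 1) + (n:ℝ)) = Real.log (y + ↑n - 1) :=
        congrArg Real.log (by ring)
      simp only [hT]
      linarith
    · filter_upwards [eventually_ge_atTop 1] with n hn
      have hn1 : (1:ℝ) ≤ n := by exact_mod_cast hn
      have f1 : psiR (x + h + ↑n) ≤ Real.log (x + h + ↑n) :=
        psiR_le_log (show (0:ℝ) < x + h + n by positivity)
      have f2 : Real.log (x + ↑n - 1) ≤ psiR (x + ↑n) :=
        log_le_psiR (show 1 < x + (n:ℝ) by linarith)
      have f3 : Real.log (y + h + ↑n - 1) ≤ psiR (y + h + ↑n) :=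
        log_le_psiR (show 1 < y + h + (n:ℝ) by linarith)
      have f4 : psiR (y + ↑n) ≤ Real.log (y + ↑n) :=
        psiR_le_log (show (0:ℝ) < y + n by positivity)
      have e1 : Real.log ((x + h) + (n:ℝ)) = Real.log (x + h + ↑n) :=
        congrArg Real.log (by ring)
      have e2 : Real.log ((x - 1) + (n:ℝ)) = Real.log (x + ↑n - 1) :=
        congrArg Real.log (by ring)
      have e3 : Real.log ((y + h - 1) + (n:ℝ)) = Real.log (y + h + ↑n - 1) :=
        congrArg Real.log (by ring)
      simp only [hT]
      linarith
  have h0 : (0:ℝ) ≤ A - s0 := by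
    apply le_of_tendsto claim2
    filter_upwards [eventually_ge_atTop 1] with n hn
    exact key n hn
  have hApos : 0 < A := by linarith
  rw [hA] at hApos
  linarith

/-- With `f(τ) := Γ(2α−τ)·Γ(τ+1)·sin(π(α−τ))`, in each of the three parameter regimes
(a) `0 < α < 1/2`, `0 < τ < α`; (b) `0 < α < 1`, `2α < τ < 1+α`;
(c) `0 < α < 1/2`, `1+2α < τ < 2`, one has `f(τ) > 0` and `f′(τ) < 0`. -/
theorem f_pos_and_deriv_neg
    (α τ : ℝ)
    (h : (0 < α ∧ α < 1 / 2 ∧ 0 < τ ∧ τ < α) ∨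
         (0 < α ∧ α < 1 ∧ 2 * α < τ ∧ τ < 1 + α) ∨
         (0 < α ∧ α < 1 / 2 ∧ 1 + 2 * α < τ ∧ τ < 2)) :
    0 < Real.Gamma (2 * α - τ) * Real.Gamma (τ + 1) * Real.sin (Real.pi * (α - τ)) ∧
      deriv (fun t : ℝ =>
          Real.Gamma (2 * α - t) * Real.Gamma (t + 1) * Real.sin (Real.pi * (α - t))) τ < 0 := by
  rcases h with ⟨hα0, hα2, hτ0, hτα⟩ | ⟨hα0, hα1, hτl, hτr⟩ | ⟨hα0, hα2, hτl, hτr⟩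
  · -- case (a)
    have p1 : 0 < 2 * α - τ := by linarith
    have p2 : 0 < τ + 1 := by linarith
    have p3 : 0 < α - τ := by linarith
    have p4 : 0 < 1 - α + τ := by linarith
    have hFeq : ∀ t ∈ Ioo (0:ℝ) α,
        Real.Gamma (2 * α - t) * Real.Gamma (t + 1) * Real.sin (Real.pi * (α - t))
          = Real.pi * Real.Gamma (2 * α - t) * Real.Gamma (t + 1)
              / (Real.Gamma (α - t) * Real.Gamma (1 - α + t)) := by
      rintro t ⟨ht0, htα⟩
      have q3 : 0 < α - t := by linarith
      have q4 : 0 < 1 - α + t := by linarith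
      have hsin : 0 < Real.sin (Real.pi * (α - t)) := by
        apply Real.sin_pos_of_pos_of_lt_pi (by positivity)
        have : α - t < 1 := by linarith
        nlinarith [Real.pi_pos]
      have hrefl := Real.Gamma_mul_Gamma_one_sub (α - t)
      rw [show 1 - (α - t) = 1 - α + t by ring] at hrefl
      have hG3 := Real.Gamma_pos_of_pos q3
      have hG4 := Real.Gamma_pos_of_pos q4
      rw [eq_div_iff hsin.ne'] at hrefl
      field_simp
      linear_combination Real.Gamma (2 * α - t) * hrefl
    have hEv : (fun t : ℝ =>
        Real.Gamma (2 * α - t) * Real.Gamma (t + 1) * Real.sin (Real.pi * (α - t)))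
        =ᶠ[nhds τ] fun t =>
        Real.pi * Real.Gamma (2 * α - t) * Real.Gamma (t + 1)
          / (Real.Gamma (α - t) * Real.Gamma (1 - α + t)) :=
      Filter.eventuallyEq_of_mem (Ioo_mem_nhds hτ0 hτα) hFeq
    have hA : HasDerivAt (fun t : ℝ => Real.Gamma (2 * α - t))
        (-(Real.Gamma (2 * α - τ) * psiR (2 * α - τ))) τ := by
      have := (hasDerivAt_Gamma_psi p1).comp τ ((hasDerivAt_id τ).const_sub (2 * α))
      simpa [Function.comp_def] using this
    have hB : HasDerivAt (fun t : ℝ => Real.Gamma (t + 1))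
        (Real.Gamma (τ + 1) * psiR (τ + 1)) τ := by
      have := (hasDerivAt_Gamma_psi p2).comp τ ((hasDerivAt_id τ).add_const 1)
      simpa [Function.comp_def] using this
    have hC : HasDerivAt (fun t : ℝ => Real.Gamma (α - t))
        (-(Real.Gamma (α - τ) * psiR (α - τ))) τ := by
      have := (hasDerivAt_Gamma_psi p3).comp τ ((hasDerivAt_id τ).const_sub α)
      simpa [Function.comp_def] using this
    have hD : HasDerivAt (fun t : ℝ => Real.Gamma (1 - α + t))
        (Real.Gamma (1 - α + τ) * psiR (1 - α + τ)) τ := by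
      have := (hasDerivAt_Gamma_psi p4).comp τ ((hasDerivAt_id τ).const_add (1 - α))
      simpa [Function.comp_def] using this
    have hG1 := Real.Gamma_pos_of_pos p1
    have hG2 := Real.Gamma_pos_of_pos p2
    have hG3 := Real.Gamma_pos_of_pos p3
    have hG4 := Real.Gamma_pos_of_pos p4
    have hden : Real.Gamma (α - τ) * Real.Gamma (1 - α + τ) ≠ 0 := by positivity
    have hFd := (((hasDerivAt_const τ Real.pi).mul hA).mul hB).div (hC.mul hD) hden
    set G : ℝ := psiR (τ + 1) - psiR (2 * α - τ) + psiR (α - τ) - psiR (1 - α + τ) with hGdef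
    set Fτ : ℝ := Real.pi * Real.Gamma (2 * α - τ) * Real.Gamma (τ + 1)
        / (Real.Gamma (α - τ) * Real.Gamma (1 - α + τ)) with hFτ
    have hFd' : HasDerivAt (fun t =>
        Real.pi * Real.Gamma (2 * α - t) * Real.Gamma (t + 1)
          / (Real.Gamma (α - t) * Real.Gamma (1 - α + t))) (Fτ * G) τ := by
      refine hFd.congr_deriv ?_
      simp only [Pi.mul_apply]
      rw [hFτ, hGdef]
      field_simp
      ring
    have hFpos : 0 < Fτ := by rw [hFτ]; positivity
    have hGneg : G < 0 := by
      have hkey := psiR_diff_lt p3 (show α - τ < τ + 1 - α by linarith) hα0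
      rw [show α - τ + α = 2 * α - τ by ring, show τ + 1 - α + α = τ + 1 by ring] at hkey
      have e : psiR (1 - α + τ) = psiR (τ + 1 - α) := by
        norm_num [show 1 - α + τ = τ + 1 - α by ring]
      rw [hGdef, e]
      linarith
    refine ⟨?_, ?_⟩
    · rw [hFeq τ ⟨hτ0, hτα⟩]; exact hFpos
    · rw [hEv.deriv_eq, hFd'.deriv]
      exact mul_neg_of_pos_of_neg hFpos hGneg
  · -- case (b)
    have p1 : 0 < 1 + 2 * α - τ := by linarith
    have p2 : 0 < τ + 1 := by linarith
    have p3 : 0 < 1 + α - τ := by linarith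
    have p4 : 0 < τ - α := by linarith
    have p5 : 0 < τ - 2 * α := by linarith
    have hFeq : ∀ t ∈ Ioo (2 * α) (1 + α),
        Real.Gamma (2 * α - t) * Real.Gamma (t + 1) * Real.sin (Real.pi * (α - t))
          = Real.pi * Real.Gamma (1 + 2 * α - t) * Real.Gamma (t + 1)
              / ((t - 2 * α) * (Real.Gamma (1 + α - t) * Real.Gamma (t - α))) := by
      rintro t ⟨htl, htr⟩
      have q1 : 0 < 1 + 2 * α - t := by linarith
      have q3 : 0 < 1 + α - t := by linarith
      have q4 : 0 < t - α := by linarith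
      have q5 : 0 < t - 2 * α := by linarith
      have hne : 2 * α - t ≠ 0 := by intro hh; linarith
      have h1 := Real.Gamma_add_one hne
      rw [show 2 * α - t + 1 = 1 + 2 * α - t by ring] at h1
      have hs : Real.sin (Real.pi * (α - t)) = -Real.sin (Real.pi * (1 + α - t)) := by
        rw [show Real.pi * (α - t) = Real.pi * (1 + α - t) - Real.pi by ring, Real.sin_sub_pi]
      have hsin : 0 < Real.sin (Real.pi * (1 + α - t)) := by
        apply Real.sin_pos_of_pos_of_lt_pi (by positivity)
        have : 1 + α - t < 1 := by linarith
        nlinarith [Real.pi_pos]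
      have hrefl := Real.Gamma_mul_Gamma_one_sub (1 + α - t)
      rw [show 1 - (1 + α - t) = t - α by ring] at hrefl
      rw [eq_div_iff hsin.ne'] at hrefl
      have hG3 := Real.Gamma_pos_of_pos q3
      have hG4 := Real.Gamma_pos_of_pos q4
      rw [eq_div_iff (show (t - 2 * α) * (Real.Gamma (1 + α - t) * Real.Gamma (t - α)) ≠ 0
        by positivity), hs]
      linear_combination (-Real.pi * Real.Gamma (t + 1)) * h1
        + (-(t - 2 * α) * Real.Gamma (2 * α - t) * Real.Gamma (t + 1)) * hrefl
    have hEv : (fun t : ℝ =>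
        Real.Gamma (2 * α - t) * Real.Gamma (t + 1) * Real.sin (Real.pi * (α - t)))
        =ᶠ[nhds τ] fun t =>
        Real.pi * Real.Gamma (1 + 2 * α - t) * Real.Gamma (t + 1)
          / ((t - 2 * α) * (Real.Gamma (1 + α - t) * Real.Gamma (t - α))) :=
      Filter.eventuallyEq_of_mem (Ioo_mem_nhds hτl hτr) hFeq
    have hA : HasDerivAt (fun t : ℝ => Real.Gamma (1 + 2 * α - t))
        (-(Real.Gamma (1 + 2 * α - τ) * psiR (1 + 2 * α - τ))) τ := by
      have := (hasDerivAt_Gamma_psi p1).comp τ ((hasDerivAt_id τ).const_sub (1 + 2 * α))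
      simpa [Function.comp_def] using this
    have hB : HasDerivAt (fun t : ℝ => Real.Gamma (t + 1))
        (Real.Gamma (τ + 1) * psiR (τ + 1)) τ := by
      have := (hasDerivAt_Gamma_psi p2).comp τ ((hasDerivAt_id τ).add_const 1)
      simpa [Function.comp_def] using this
    have hC : HasDerivAt (fun t : ℝ => Real.Gamma (1 + α - t))
        (-(Real.Gamma (1 + α - τ) * psiR (1 + α - τ))) τ := by
      have := (hasDerivAt_Gamma_psi p3).comp τ ((hasDerivAt_id τ).const_sub (1 + α))
      simpa [Function.comp_def] using this
    have hD : HasDerivAt (fun t : ℝ => Real.Gamma (t - α))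
        (Real.Gamma (τ - α) * psiR (τ - α)) τ := by
      have := (hasDerivAt_Gamma_psi p4).comp τ ((hasDerivAt_id τ).sub_const α)
      simpa [Function.comp_def] using this
    have hE : HasDerivAt (fun t : ℝ => t - 2 * α) 1 τ := (hasDerivAt_id τ).sub_const (2 * α)
    have hG1 := Real.Gamma_pos_of_pos p1
    have hG2 := Real.Gamma_pos_of_pos p2
    have hG3 := Real.Gamma_pos_of_pos p3
    have hG4 := Real.Gamma_pos_of_pos p4
    have hden : (τ - 2 * α) * (Real.Gamma (1 + α - τ) * Real.Gamma (τ - α)) ≠ 0 := by positivity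
    have hFd := (((hasDerivAt_const τ Real.pi).mul hA).mul hB).div (hE.mul (hC.mul hD)) hden
    set G : ℝ := psiR (τ + 1) - psiR (1 + 2 * α - τ) + psiR (1 + α - τ) - psiR (τ - α)
        - 1 / (τ - 2 * α) with hGdef
    set Fτ : ℝ := Real.pi * Real.Gamma (1 + 2 * α - τ) * Real.Gamma (τ + 1)
        / ((τ - 2 * α) * (Real.Gamma (1 + α - τ) * Real.Gamma (τ - α))) with hFτ
    have hFd' : HasDerivAt (fun t =>
        Real.pi * Real.Gamma (1 + 2 * α - t) * Real.Gamma (t + 1)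
          / ((t - 2 * α) * (Real.Gamma (1 + α - t) * Real.Gamma (t - α)))) (Fτ * G) τ := by
      refine hFd.congr_deriv ?_
      simp only [Pi.mul_apply]
      rw [hFτ, hGdef]
      field_simp
      ring
    have hFpos : 0 < Fτ := by rw [hFτ]; positivity
    have hGneg : G < 0 := by
      have hshift := psiR_add_one p4
      rw [show τ - α + 1 = τ + 1 - α by ring] at hshift
      have hkey := psiR_diff_lt p3 (show 1 + α - τ < τ + 1 - α by linarith) hα0
      rw [show 1 + α - τ + α = 1 + 2 * α - τ by ring,
        show τ + 1 - α + α = τ + 1 by ring] at hkey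
      have hrat : 1 / (τ - α) < 1 / (τ - 2 * α) :=
        one_div_lt_one_div_of_lt p5 (by linarith)
      rw [hGdef]
      linarith
    refine ⟨?_, ?_⟩
    · rw [hFeq τ ⟨hτl, hτr⟩]; exact hFpos
    · rw [hEv.deriv_eq, hFd'.deriv]
      exact mul_neg_of_pos_of_neg hFpos hGneg
  · -- case (c)
    have p1 : 0 < 2 + 2 * α - τ := by linarith
    have p2 : 0 < τ + 1 := by linarith
    have p3 : 0 < 2 + α - τ := by linarith
    have p4 : 0 < τ - 1 - α := by linarith
    have p5 : 0 < τ - 2 * α := by linarith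
    have p6 : 0 < τ - 2 * α - 1 := by linarith
    have hFeq : ∀ t ∈ Ioo (1 + 2 * α) 2,
        Real.Gamma (2 * α - t) * Real.Gamma (t + 1) * Real.sin (Real.pi * (α - t))
          = Real.pi * Real.Gamma (2 + 2 * α - t) * Real.Gamma (t + 1)
              / (((t - 2 * α) * (t - 2 * α - 1))
                  * (Real.Gamma (2 + α - t) * Real.Gamma (t - 1 - α))) := by
      rintro t ⟨htl, htr⟩
      have q1 : 0 < 2 + 2 * α - t := by linarith
      have q3 : 0 < 2 + α - t := by linarith
      have q4 : 0 < t - 1 - α := by linarith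
      have q5 : 0 < t - 2 * α := by linarith
      have q6 : 0 < t - 2 * α - 1 := by linarith
      have hne1 : 2 * α - t ≠ 0 := by intro hh; linarith
      have hne2 : 1 + 2 * α - t ≠ 0 := by intro hh; linarith
      have h1 := Real.Gamma_add_one hne1
      rw [show 2 * α - t + 1 = 1 + 2 * α - t by ring] at h1
      have h2 := Real.Gamma_add_one hne2
      rw [show 1 + 2 * α - t + 1 = 2 + 2 * α - t by ring] at h2
      have hcomb : Real.Gamma (2 + 2 * α - t)
          = (t - 2 * α) * (t - 2 * α - 1) * Real.Gamma (2 * α - t) := by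
        rw [h2, h1]; ring
      have hs : Real.sin (Real.pi * (α - t)) = Real.sin (Real.pi * (2 + α - t)) := by
        rw [show Real.pi * (2 + α - t) = Real.pi * (α - t) + 2 * Real.pi by ring,
          Real.sin_add_two_pi]
      have hsin : 0 < Real.sin (Real.pi * (2 + α - t)) := by
        apply Real.sin_pos_of_pos_of_lt_pi (by positivity)
        have : 2 + α - t < 1 := by linarith
        nlinarith [Real.pi_pos]
      have hrefl := Real.Gamma_mul_Gamma_one_sub (2 + α - t)
      rw [show 1 - (2 + α - t) = t - 1 - α by ring] at hrefl
      rw [eq_div_iff hsin.ne'] at hrefl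
      have hG3 := Real.Gamma_pos_of_pos q3
      have hG4 := Real.Gamma_pos_of_pos q4
      rw [eq_div_iff (show ((t - 2 * α) * (t - 2 * α - 1))
          * (Real.Gamma (2 + α - t) * Real.Gamma (t - 1 - α)) ≠ 0 by positivity), hs]
      linear_combination (-Real.pi * Real.Gamma (t + 1)) * hcomb
        + ((t - 2 * α) * (t - 2 * α - 1) * Real.Gamma (2 * α - t) * Real.Gamma (t + 1)) * hrefl
    have hEv : (fun t : ℝ =>
        Real.Gamma (2 * α - t) * Real.Gamma (t + 1) * Real.sin (Real.pi * (α - t)))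
        =ᶠ[nhds τ] fun t =>
        Real.pi * Real.Gamma (2 + 2 * α - t) * Real.Gamma (t + 1)
          / (((t - 2 * α) * (t - 2 * α - 1))
              * (Real.Gamma (2 + α - t) * Real.Gamma (t - 1 - α))) :=
      Filter.eventuallyEq_of_mem (Ioo_mem_nhds hτl hτr) hFeq
    have hA : HasDerivAt (fun t : ℝ => Real.Gamma (2 + 2 * α - t))
        (-(Real.Gamma (2 + 2 * α - τ) * psiR (2 + 2 * α - τ))) τ := by
      have := (hasDerivAt_Gamma_psi p1).comp τ ((hasDerivAt_id τ).const_sub (2 + 2 * α))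
      simpa [Function.comp_def] using this
    have hB : HasDerivAt (fun t : ℝ => Real.Gamma (t + 1))
        (Real.Gamma (τ + 1) * psiR (τ + 1)) τ := by
      have := (hasDerivAt_Gamma_psi p2).comp τ ((hasDerivAt_id τ).add_const 1)
      simpa [Function.comp_def] using this
    have hC : HasDerivAt (fun t : ℝ => Real.Gamma (2 + α - t))
        (-(Real.Gamma (2 + α - τ) * psiR (2 + α - τ))) τ := by
      have := (hasDerivAt_Gamma_psi p3).comp τ ((hasDerivAt_id τ).const_sub (2 + α))
      simpa [Function.comp_def] using this
    have hD : HasDerivAt (fun t : ℝ => Real.Gamma (t - 1 - α))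
        (Real.Gamma (τ - 1 - α) * psiR (τ - 1 - α)) τ := by
      have := (hasDerivAt_Gamma_psi p4).comp τ (((hasDerivAt_id τ).sub_const 1).sub_const α)
      simpa [Function.comp_def] using this
    have hE1 : HasDerivAt (fun t : ℝ => t - 2 * α) 1 τ := (hasDerivAt_id τ).sub_const (2 * α)
    have hE2 : HasDerivAt (fun t : ℝ => t - 2 * α - 1) 1 τ :=
      ((hasDerivAt_id τ).sub_const (2 * α)).sub_const 1
    have hG1 := Real.Gamma_pos_of_pos p1
    have hG2 := Real.Gamma_pos_of_pos p2
    have hG3 := Real.Gamma_pos_of_pos p3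
    have hG4 := Real.Gamma_pos_of_pos p4
    have hden : ((τ - 2 * α) * (τ - 2 * α - 1))
        * (Real.Gamma (2 + α - τ) * Real.Gamma (τ - 1 - α)) ≠ 0 := by positivity
    have hFd := (((hasDerivAt_const τ Real.pi).mul hA).mul hB).div
      ((hE1.mul hE2).mul (hC.mul hD)) hden
    set G : ℝ := psiR (τ + 1) - psiR (2 + 2 * α - τ) + psiR (2 + α - τ) - psiR (τ - 1 - α)
        - 1 / (τ - 2 * α) - 1 / (τ - 2 * α - 1) with hGdef
    set Fτ : ℝ := Real.pi * Real.Gamma (2 + 2 * α - τ) * Real.Gamma (τ + 1)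
        / (((τ - 2 * α) * (τ - 2 * α - 1))
            * (Real.Gamma (2 + α - τ) * Real.Gamma (τ - 1 - α))) with hFτ
    have hFd' : HasDerivAt (fun t =>
        Real.pi * Real.Gamma (2 + 2 * α - t) * Real.Gamma (t + 1)
          / (((t - 2 * α) * (t - 2 * α - 1))
              * (Real.Gamma (2 + α - t) * Real.Gamma (t - 1 - α)))) (Fτ * G) τ := by
      refine hFd.congr_deriv ?_
      simp only [Pi.mul_apply]
      rw [hFτ, hGdef]
      field_simp
      ring
    have hFpos : 0 < Fτ := by rw [hFτ]; positivity
    have hGneg : G < 0 := by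
      have hsh1 := psiR_add_one p4
      rw [show τ - 1 - α + 1 = τ - α by ring] at hsh1
      have hsh2 := psiR_add_one (show (0:ℝ) < τ - α by linarith)
      rw [show τ - α + 1 = τ + 1 - α by ring] at hsh2
      have hkey := psiR_diff_lt p3 (show 2 + α - τ < τ + 1 - α by linarith) hα0
      rw [show 2 + α - τ + α = 2 + 2 * α - τ by ring,
        show τ + 1 - α + α = τ + 1 by ring] at hkey
      have hrat1 : 1 / (τ - α) < 1 / (τ - 2 * α) :=
        one_div_lt_one_div_of_lt p5 (by linarith)
      have hrat2 : 1 / (τ - 1 - α) < 1 / (τ - 2 * α - 1) :=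
        one_div_lt_one_div_of_lt p6 (by linarith)
      rw [hGdef]
      linarith
    refine ⟨?_, ?_⟩
    · rw [hFeq τ ⟨hτl, hτr⟩]; exact hFpos
    · rw [hEv.deriv_eq, hFd'.deriv]
      exact mul_neg_of_pos_of_neg hFpos hGneg
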